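/- arXiv:math/9512226 — 3 statements merged into one kernel-verified Lean document; each statement's English description precedes it below -/
import Mathlib

section
/- Let δ < λ be regular cardinals with δ inaccessible and λ > δ⁺, let S ⊆ λ be a set of ordinals each of cofinality δ and greater than δ, and let X = ⟨x_β : β ∈ S⟩ be a sequence such that each x_β ⊆ β is cofinal in β and has order type δ. Then for every infinite cardinal γ < δ, the ordering ⟨P¹_{δ,λ}[S], ≤^γ⟩ is γ⁺-directed closed: every subset of P¹_{δ,λ}[S] of cardinality at most γ which is directed with respect to ≤^γ has an upper bound with respect to ≤^γ. -/
open Cardinal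

/-- The order type of a set of ordinals. -/
noncomputable def otype (s : Set Ordinal.{0}) : Ordinal.{1} :=
  Ordinal.type (Subrel ((· < ·) : Ordinal.{0} → Ordinal.{0} → Prop) (· ∈ s))

/-- A condition in `P¹_{δ,λ}[S]` (relative to the fixed `♣(S)`-sequence
`⟨x_β : β ∈ S⟩`): a `5`-tuple `⟨w, α, r̄, Z, Γ⟩` as described in the paper.  The functions
`Z` and `Γ`, whose domains are subsets of `{x_β : β ∈ S}`, are represented by the set `B`
of indices `β` together with total functions `Z` and `G` on ordinals (whose values are
only relevant on `B`); similarly `r̄ = ⟨r_i : i ∈ w⟩` is represented by a total function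
`r`, relevant only for `i ∈ w` and arguments `< bound`. -/
structure P1Cond (δ lam : Cardinal.{0}) (S : Set Ordinal.{0})
    (x : Ordinal.{0} → Set Ordinal.{0}) where
  /-- the support `w` -/
  w : Set Ordinal.{0}
  /-- the common domain `α` of the functions `r_i` -/
  bound : Ordinal.{0}
  /-- `r i ξ` is the value `r_i(ξ)` for `i ∈ w`, `ξ < bound` -/
  r : Ordinal.{0} → Ordinal.{0} → Bool
  /-- the set of `β ∈ S` with `x_β ∈ dom(Z) = dom(Γ)` -/
  B : Set Ordinal.{0}
  /-- `Z β` is the value `Z(x_β)` for `β ∈ B` -/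
  Z : Ordinal.{0} → Bool
  /-- `G β` is the value `Γ(x_β)` for `β ∈ B` -/
  G : Ordinal.{0} → Set Ordinal.{0}
  w_sub : w ⊆ Set.Iio lam.ord
  w_card : #w = Cardinal.lift.{1} δ
  bound_lt : bound < δ.ord
  B_sub : B ⊆ S
  Z_cond : ∀ β ∈ B, ∃ y : Set Ordinal.{0}, y ⊆ x β ∩ w ∧ #y = Cardinal.lift.{1} δ ∧
    ∃ b < β, x β \ y ⊆ Set.Iio b
  G_bdd : ∀ β ∈ B, G β ⊆ Set.Iio bound
  G_closed : ∀ β ∈ B, ∀ s : Set Ordinal.{0}, s ⊆ G β → s.Nonempty → sSup s ∈ G β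
  G_cond : ∀ β ∈ B, ∀ ξ ∈ G β, (∃ c : Cardinal.{0}, ξ = c.ord ∧ c.IsInaccessible) →
    ∀ b ∈ x β, otype {c | c ∈ x β ∧ c < b} = Ordinal.lift.{1} ξ →
      b ∈ w ∧ ∃ b', b' < b ∧ b' ∈ w ∧ b' ∈ x β ∧ r b' ξ = Z β

/-- The ordering on `P¹_{δ,λ}[S]`. -/
def P1Cond.le {δ lam : Cardinal.{0}} {S : Set Ordinal.{0}}
    {x : Ordinal.{0} → Set Ordinal.{0}} (p q : P1Cond δ lam S x) : Prop :=
  p.w ⊆ q.w ∧ p.bound ≤ q.bound ∧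
    (∀ i ∈ p.w, ∀ ξ < p.bound, p.r i ξ = q.r i ξ) ∧
    #{i : Ordinal.{0} | i ∈ p.w ∧ ∃ ξ, p.bound ≤ ξ ∧ ξ < q.bound ∧ q.r i ξ ≠ false} <
      Cardinal.lift.{1} δ ∧
    p.B ⊆ q.B ∧ (∀ β ∈ p.B, p.Z β = q.Z β) ∧
    (∀ β ∈ p.B, p.G β ⊆ q.G β ∧ ∀ ξ ∈ q.G β, ξ ∉ p.G β → ∀ η ∈ p.G β, η < ξ) ∧
    #{β : Ordinal.{0} | β ∈ p.B ∧ p.G β ≠ q.G β} < Cardinal.lift.{1} δ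

/-- The auxiliary ordering `≤^γ` on `P¹_{δ,λ}[S]`: `p ≤^γ q` iff `p = q`, or `p < q` and
every `Γ`-value changed from `p` to `q` acquires a maximum above `γ`. -/
def P1Cond.leGamma {δ lam : Cardinal.{0}} {S : Set Ordinal.{0}}
    {x : Ordinal.{0} → Set Ordinal.{0}} (γ : Cardinal.{0})
    (p q : P1Cond δ lam S x) : Prop :=
  p = q ∨ (p.le q ∧ p ≠ q ∧ ∀ β ∈ p.B, p.G β ≠ q.G β → γ.ord < sSup (q.G β))

section Accessors

variable {δ lam : Cardinal.{0}} {S : Set Ordinal.{0}}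
  {x : Ordinal.{0} → Set Ordinal.{0}} {p q : P1Cond δ lam S x}

theorem P1Cond.le.wsub (h : p.le q) : p.w ⊆ q.w := h.1
theorem P1Cond.le.bd (h : p.le q) : p.bound ≤ q.bound := h.2.1
theorem P1Cond.le.req (h : p.le q) : ∀ i ∈ p.w, ∀ ξ < p.bound, p.r i ξ = q.r i ξ := h.2.2.1
theorem P1Cond.le.rcard (h : p.le q) :
    #{i : Ordinal.{0} | i ∈ p.w ∧ ∃ ξ, p.bound ≤ ξ ∧ ξ < q.bound ∧ q.r i ξ ≠ false} <
      Cardinal.lift.{1} δ := h.2.2.2.1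
theorem P1Cond.le.Bsub (h : p.le q) : p.B ⊆ q.B := h.2.2.2.2.1
theorem P1Cond.le.Zeq (h : p.le q) : ∀ β ∈ p.B, p.Z β = q.Z β := h.2.2.2.2.2.1
theorem P1Cond.le.Gsub (h : p.le q) : ∀ β ∈ p.B, p.G β ⊆ q.G β :=
  fun β hβ => (h.2.2.2.2.2.2.1 β hβ).1
theorem P1Cond.le.Gab (h : p.le q) :
    ∀ β ∈ p.B, ∀ ξ ∈ q.G β, ξ ∉ p.G β → ∀ η ∈ p.G β, η < ξ :=
  fun β hβ => (h.2.2.2.2.2.2.1 β hβ).2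
theorem P1Cond.le.Gcard (h : p.le q) :
    #{β : Ordinal.{0} | β ∈ p.B ∧ p.G β ≠ q.G β} < Cardinal.lift.{1} δ := h.2.2.2.2.2.2.2

end Accessors

/-- For every infinite cardinal `γ < δ`, the ordering
`⟨P¹_{δ,λ}[S], ≤^γ⟩` is `γ⁺`-directed closed: every subset of cardinality at most `γ`
which is directed with respect to `≤^γ` has an upper bound with respect to `≤^γ`. -/
theorem P1_leGamma_directed_closed (δ lam : Cardinal.{0})
    (hδreg : δ.IsRegular) (hlamreg : lam.IsRegular)
    (hδinacc : δ.IsInaccessible) (hlt : δ < lam) (hlam_gt : Order.succ δ < lam)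
    (S : Set Ordinal.{0}) (hS_sub : S ⊆ Set.Iio lam.ord)
    (hS_cof : ∀ β ∈ S, Ordinal.cof β = δ) (hS_gt : ∀ β ∈ S, δ.ord < β)
    (x : Ordinal.{0} → Set Ordinal.{0})
    (hx_sub : ∀ β ∈ S, x β ⊆ Set.Iio β)
    (hx_cofinal : ∀ β ∈ S, ∀ c < β, ∃ d ∈ x β, c ≤ d)
    (hx_ot : ∀ β ∈ S, otype (x β) = Ordinal.lift.{1} δ.ord)
    (γ : Cardinal.{0}) (hγinf : ℵ₀ ≤ γ) (hγlt : γ < δ) :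
    ∀ D : Set (P1Cond δ lam S x), #D ≤ Cardinal.lift.{1} γ →
      (∀ p ∈ D, ∀ q ∈ D, ∃ s ∈ D, P1Cond.leGamma γ p s ∧ P1Cond.leGamma γ q s) →
      ∃ s : P1Cond δ lam S x, ∀ p ∈ D, P1Cond.leGamma γ p s := by
  classical
  intro D hDcard hdir
  have hδω : ℵ₀ ≤ δ := hδreg.aleph0_le
  have hlift_reg : (Cardinal.lift.{1} δ).IsRegular := by
    constructor
    · exact Cardinal.aleph0_le_lift.mpr hδω
    · rw [← Cardinal.lift_ord, ← Ordinal.lift_cof]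
      exact Cardinal.lift_le.mpr hδreg.2
  have hempty_lt : ∀ T : Set Ordinal.{0}, T = ∅ → #T < Cardinal.lift.{1} δ := by
    intro T hT
    rw [hT, Cardinal.mk_emptyCollection]
    exact hlift_reg.pos
  -- reflexivity of `le`
  have hlerefl : ∀ p : P1Cond δ lam S x, p.le p := by
    intro p
    refine ⟨subset_rfl, le_rfl, fun i _ ξ _ => rfl, ?_, subset_rfl, fun β _ => rfl,
      fun β _ => ⟨subset_rfl, fun ξ hξ hnξ η hη => absurd hξ hnξ⟩, ?_⟩
    · apply hempty_lt
      ext i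
      simp only [Set.mem_setOf_eq, Set.mem_empty_iff_false, iff_false]
      rintro ⟨-, ξ, h1, h2, -⟩
      exact absurd (h1.trans_lt h2) (lt_irrefl _)
    · apply hempty_lt
      ext β
      simp only [Set.mem_setOf_eq, Set.mem_empty_iff_false, iff_false]
      rintro ⟨-, h⟩
      exact h rfl
  -- upper bounds from directedness
  have hup : ∀ p ∈ D, ∀ q ∈ D, ∃ u ∈ D, p.le u ∧ q.le u ∧
      ∀ β ∈ p.B, p.G β ≠ u.G β → γ.ord < sSup (u.G β) := by
    intro p hp q hq
    obtain ⟨u, hu, h1, h2⟩ := hdir p hp q hq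
    refine ⟨u, hu, ?_, ?_, ?_⟩
    · rcases h1 with rfl | ⟨h, -, -⟩
      exacts [hlerefl p, h]
    · rcases h2 with rfl | ⟨h, -, -⟩
      exacts [hlerefl q, h]
    · rcases h1 with rfl | ⟨-, -, h⟩
      · exact fun β _ hne => absurd rfl hne
      · exact h
  rcases Set.eq_empty_or_nonempty D with rfl | ⟨p₀, hp₀⟩
  · refine ⟨⟨Set.Iio δ.ord, 0, fun _ _ => false, ∅, fun _ => false, fun _ => ∅,
      ?_, ?_, hδreg.ord_pos, Set.empty_subset S,
      fun β hβ => absurd hβ (Set.notMem_empty β),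
      fun β hβ => absurd hβ (Set.notMem_empty β),
      fun β hβ => absurd hβ (Set.notMem_empty β),
      fun β hβ => absurd hβ (Set.notMem_empty β)⟩,
      fun p hp => absurd hp (Set.notMem_empty p)⟩
    · intro a ha
      exact Set.mem_Iio.mpr ((Set.mem_Iio.mp ha).trans_le (Cardinal.ord_le_ord.mpr hlt.le))
    · rw [Ordinal.mk_Iio_ordinal, Cardinal.card_ord]
  -- D nonempty: index it by γ.out
  haveI hDne : Nonempty (↥D) := ⟨⟨p₀, hp₀⟩⟩
  have hγ0 : γ ≠ 0 := (aleph0_pos.trans_le hγinf).ne'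
  haveI hιne : Nonempty γ.out := Cardinal.mk_ne_zero_iff.mp (by rw [Cardinal.mk_out]; exact hγ0)
  haveI hιne' : Nonempty (ULift.{1} γ.out) := ⟨⟨hιne.some⟩⟩
  obtain ⟨e⟩ : Nonempty (↥D ↪ ULift.{1} γ.out) := by
    rw [← Cardinal.le_def, Cardinal.mk_uLift, Cardinal.mk_out]
    exact hDcard
  set g : γ.out → P1Cond δ lam S x := fun i => ((Function.invFun e) ⟨i⟩ : ↥D) with hg
  have hg1 : ∀ i, g i ∈ D := fun i => ((Function.invFun e) ⟨i⟩).2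
  have hg2 : ∀ p ∈ D, ∃ i, g i = p := by
    intro p hp
    refine ⟨(e ⟨p, hp⟩).down, ?_⟩
    show ((Function.invFun e) ⟨(e ⟨p, hp⟩).down⟩ : ↥D).1 = p
    have h1 : (⟨(e ⟨p, hp⟩).down⟩ : ULift.{1} γ.out) = e ⟨p, hp⟩ := rfl
    rw [h1, Function.leftInverse_invFun e.injective ⟨p, hp⟩]
  -- the new bound
  obtain ⟨bsup, hbD, hbδ⟩ : ∃ b : Ordinal.{0}, (∀ q ∈ D, q.bound ≤ b) ∧ b + 1 < δ.ord := by
    refine ⟨⨆ i, (g i).bound, ?_, ?_⟩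
    · intro q hq
      obtain ⟨i, rfl⟩ := hg2 q hq
      exact le_ciSup (Ordinal.bddAbove_range _) i
    · have h1 : (⨆ i, (g i).bound) < δ.ord := by
        apply Ordinal.iSup_lt_ord _ fun i => (g i).bound_lt
        rw [Cardinal.mk_out, hδreg.cof_eq]
        exact hγlt
      rw [Ordinal.add_one_eq_succ]
      exact (Cardinal.isSuccLimit_ord hδω).succ_lt h1
  have hb1 : bsup < bsup + 1 := by
    rw [Ordinal.add_one_eq_succ]
    exact Order.lt_succ bsup
  -- the new support
  obtain ⟨W, hWD, hWmem, hWcard⟩ :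
      ∃ W : Set Ordinal.{0}, (∀ q ∈ D, q.w ⊆ W) ∧ (∀ j ∈ W, ∃ q ∈ D, j ∈ q.w) ∧
        Cardinal.mk W = Cardinal.lift.{1} δ := by
    have hsub : ∀ q ∈ D, q.w ⊆ ⋃ i' : ULift.{1} γ.out, (g i'.down).w := by
      intro q hq
      obtain ⟨i, rfl⟩ := hg2 q hq
      exact Set.subset_iUnion (fun i' : ULift.{1} γ.out => (g i'.down).w) ⟨i⟩
    refine ⟨⋃ i' : ULift.{1} γ.out, (g i'.down).w, hsub, ?_, ?_⟩
    · intro j hj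
      obtain ⟨i', hi'⟩ := Set.mem_iUnion.mp hj
      exact ⟨g i'.down, hg1 _, hi'⟩
    · apply le_antisymm
      · calc #(⋃ i' : ULift.{1} γ.out, (g i'.down).w)
            ≤ #(ULift.{1} γ.out) * ⨆ i' : ULift.{1} γ.out, #((g i'.down).w) :=
              Cardinal.mk_iUnion_le _
          _ = Cardinal.lift.{1} γ * Cardinal.lift.{1} δ := by
              rw [Cardinal.mk_uLift, Cardinal.mk_out]
              congr 1
              have h2 : ∀ i' : ULift.{1} γ.out, #((g i'.down).w) = Cardinal.lift.{1} δ :=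
                fun i' => (g i'.down).w_card
              simp only [h2]
              exact ciSup_const
          _ = Cardinal.lift.{1} δ :=
              Cardinal.mul_eq_right hlift_reg.aleph0_le (Cardinal.lift_le.mpr hγlt.le)
                (by simpa using hγ0)
      · rw [← p₀.w_card]
        exact Cardinal.mk_le_mk_of_subset (hsub p₀ hp₀)
  -- the new B
  obtain ⟨BB, hBD, hBmem⟩ :
      ∃ BB : Set Ordinal.{0}, (∀ q ∈ D, q.B ⊆ BB) ∧ ∀ β ∈ BB, ∃ q ∈ D, β ∈ q.B := by
    refine ⟨⋃ i, (g i).B, ?_, ?_⟩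
    · intro q hq
      obtain ⟨i, rfl⟩ := hg2 q hq
      exact Set.subset_iUnion (fun i => (g i).B) i
    · intro β hβ
      obtain ⟨i, hi⟩ := Set.mem_iUnion.mp hβ
      exact ⟨g i, hg1 i, hi⟩
  -- the new r
  obtain ⟨R, hR1, hR2⟩ :
      ∃ R : Ordinal.{0} → Ordinal.{0} → Bool,
        (∀ q ∈ D, ∀ j ∈ q.w, ∀ ξ, ξ < q.bound → R j ξ = q.r j ξ) ∧
        ∀ j ξ, R j ξ ≠ false → ∃ q ∈ D, j ∈ q.w ∧ ξ < q.bound ∧ q.r j ξ ≠ false := by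
    refine ⟨fun j ξ =>
      if h : ∃ q ∈ D, j ∈ q.w ∧ ξ < q.bound then h.choose.r j ξ else false, ?_, ?_⟩
    · intro q hq j hj ξ hξ
      have hex : ∃ q' ∈ D, j ∈ q'.w ∧ ξ < q'.bound := ⟨q, hq, hj, hξ⟩
      simp only [dif_pos hex]
      obtain ⟨hq', hj', hξ'⟩ := hex.choose_spec
      obtain ⟨u, hu, hu1, hu2, -⟩ := hup _ hq' q hq
      rw [hu1.req j hj' ξ hξ', hu2.req j hj ξ hξ]
    · intro j ξ h
      by_cases hex : ∃ q ∈ D, j ∈ q.w ∧ ξ < q.bound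
      · obtain ⟨hq', hj', hξ'⟩ := hex.choose_spec
        simp only [dif_pos hex] at h
        exact ⟨hex.choose, hq', hj', hξ', h⟩
      · simp only [dif_neg hex] at h
        exact absurd rfl h
  -- the new Z
  obtain ⟨ZZ, hZ1⟩ : ∃ Z : Ordinal.{0} → Bool, ∀ q ∈ D, ∀ β ∈ q.B, Z β = q.Z β := by
    refine ⟨fun β => if h : ∃ q ∈ D, β ∈ q.B then h.choose.Z β else false, ?_⟩
    intro q hq β hβ
    have hex : ∃ q' ∈ D, β ∈ q'.B := ⟨q, hq, hβ⟩
    simp only [dif_pos hex]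
    obtain ⟨hq', hβ'⟩ := hex.choose_spec
    obtain ⟨u, hu, hu1, hu2, -⟩ := hup _ hq' q hq
    rw [hu1.Zeq β hβ', hu2.Zeq β hβ]
  -- the union of the Γ-values
  obtain ⟨U, hUmem⟩ : ∃ U : Ordinal.{0} → Set Ordinal.{0},
      ∀ β a, a ∈ U β ↔ ∃ q ∈ D, β ∈ q.B ∧ a ∈ q.G β :=
    ⟨fun β => {a | ∃ q ∈ D, β ∈ q.B ∧ a ∈ q.G β}, fun β a => Iff.rfl⟩
  have hGsubU : ∀ q ∈ D, ∀ β ∈ q.B, q.G β ⊆ U β :=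
    fun q hq β hβ a ha => (hUmem β a).mpr ⟨q, hq, hβ, ha⟩
  have hUbd : ∀ β, ∀ a ∈ U β, a ≤ bsup := by
    intro β a ha
    obtain ⟨q, hq, hβ, haq⟩ := (hUmem β a).mp ha
    exact ((q.G_bdd β hβ haq).trans_le (hbD q hq)).le
  have hbddU : ∀ β, BddAbove (U β) := fun β => ⟨bsup, fun a ha => hUbd β a ha⟩
  have hbddG : ∀ q : P1Cond δ lam S x, ∀ β ∈ q.B, BddAbove (q.G β) :=
    fun q β hβ => ⟨q.bound, fun a ha => (q.G_bdd β hβ ha).le⟩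
  -- downward closedness of each Γ-value in the union
  have hA : ∀ p ∈ D, ∀ q ∈ D, ∀ β, β ∈ p.B → β ∈ q.B →
      ∀ a ∈ q.G β, ∀ η ∈ p.G β, a ≤ η → a ∈ p.G β := by
    intro p hp q hq β hβp hβq a ha η hη hle
    obtain ⟨u, hu, hpu, hqu, -⟩ := hup p hp q hq
    by_contra hna
    have hau : a ∈ u.G β := hqu.Gsub β hβq ha
    exact absurd hle (not_le.mpr (hpu.Gab β hβp a hau hna η hη))
  -- extracting a new element when the union is strictly bigger
  have hexa : ∀ p ∈ D, ∀ β ∈ p.B, p.G β ≠ U β → ∃ a ∈ U β, a ∉ p.G β := by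
    intro p hp β hβ hne
    by_contra h
    push_neg at h
    exact hne (Set.Subset.antisymm (hGsubU p hp β hβ) fun a ha => h a ha)
  -- the new Γ
  obtain ⟨GG, hGG1, hGG2⟩ : ∃ GG : Ordinal.{0} → Set Ordinal.{0},
      (∀ β, (U β).Nonempty → GG β = U β ∪ {sSup (U β)}) ∧
      ∀ β, ¬(U β).Nonempty → GG β = ∅ :=
    ⟨fun β => if h : (U β).Nonempty then U β ∪ {sSup (U β)} else ∅,
      fun β h => dif_pos h, fun β h => dif_neg h⟩
  have hUGG : ∀ β, U β ⊆ GG β := by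
    intro β a ha
    rw [hGG1 β ⟨a, ha⟩]
    exact Or.inl ha
  have hGGbd : ∀ β, ∀ a ∈ GG β, a ≤ bsup := by
    intro β a ha
    by_cases h : (U β).Nonempty
    · rw [hGG1 β h] at ha
      rcases ha with ha | ha
      · exact hUbd β a ha
      · rw [Set.mem_singleton_iff] at ha
        rw [ha]
        exact csSup_le h (hUbd β)
    · rw [hGG2 β h] at ha
      exact absurd ha (Set.notMem_empty a)
  have hbddGG : ∀ β, BddAbove (GG β) := fun β => ⟨bsup, fun a ha => hGGbd β a ha⟩
  -- the upper bound
  obtain ⟨s, hsW, hsbd, hsR, hsB, hsZ, hsG⟩ :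
      ∃ s : P1Cond δ lam S x, s.w = W ∧ s.bound = bsup + 1 ∧ s.r = R ∧ s.B = BB ∧
        s.Z = ZZ ∧ s.G = GG := by
    refine ⟨⟨W, bsup + 1, R, BB, ZZ, GG, ?_, hWcard, hbδ, ?_, ?_, ?_, ?_, ?_⟩,
      rfl, rfl, rfl, rfl, rfl, rfl⟩
    · -- w_sub
      intro j hj
      obtain ⟨q, hq, hjq⟩ := hWmem j hj
      exact q.w_sub hjq
    · -- B_sub
      intro β hβ
      obtain ⟨q, hq, hβq⟩ := hBmem β hβ
      exact q.B_sub hβq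
    · -- Z_cond
      intro β hβ
      obtain ⟨q, hq, hβq⟩ := hBmem β hβ
      obtain ⟨y, hy1, hy2, b, hb, hy3⟩ := q.Z_cond β hβq
      exact ⟨y, fun a ha => ⟨(hy1 ha).1, hWD q hq (hy1 ha).2⟩, hy2, b, hb, hy3⟩
    · -- G_bdd
      intro β hβ a ha
      exact Set.mem_Iio.mpr ((hGGbd β a ha).trans_lt hb1)
    · -- G_closed
      intro β hβ s' hs' hne'
      have hUne : (U β).Nonempty := by
        by_contra h
        rw [hGG2 β h] at hs'
        exact absurd (hs' hne'.some_mem) (Set.notMem_empty _)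
      rw [hGG1 β hUne] at hs' ⊢
      have hub : ∀ a ∈ s', a ≤ sSup (U β) := by
        intro a ha
        rcases hs' ha with h | h
        · exact le_csSup (hbddU β) h
        · exact le_of_eq (Set.mem_singleton_iff.mp h)
      have hbs' : BddAbove s' := ⟨sSup (U β), fun a ha => hub a ha⟩
      have hσle : sSup s' ≤ sSup (U β) := csSup_le hne' hub
      rcases eq_or_lt_of_le hσle with heq | hlt'
      · rw [heq]
        exact Or.inr rfl
      · have hs'U : s' ⊆ U β := by
          intro a ha
          rcases hs' ha with h | h
          · exact h
          · exfalso
            rw [Set.mem_singleton_iff] at h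
            rw [h] at ha
            exact absurd (le_csSup hbs' ha) (not_le.mpr hlt')
        by_cases hcase : ∃ q ∈ D, β ∈ q.B ∧ ∃ η ∈ q.G β, sSup s' ≤ η
        · obtain ⟨q, hq, hβq, η, hη, hηle⟩ := hcase
          have hsq : s' ⊆ q.G β := by
            intro a ha
            obtain ⟨q', hq', hβ', ha'⟩ := (hUmem β a).mp (hs'U ha)
            exact hA q hq q' hq' β hβq hβ' a ha' η hη ((le_csSup hbs' ha).trans hηle)
          exact Or.inl (hGsubU q hq β hβq (q.G_closed β hβq s' hsq hne'))
        · exfalso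
          push_neg at hcase
          have : sSup (U β) ≤ sSup s' := by
            apply csSup_le hUne
            intro a ha
            obtain ⟨q, hq, hβq, haq⟩ := (hUmem β a).mp ha
            exact (hcase q hq hβq a haq).le
          exact absurd this (not_le.mpr hlt')
    · -- G_cond
      intro β hβ ξ hξ hinacc b hb hot
      have hUne : (U β).Nonempty := by
        by_contra h
        rw [hGG2 β h] at hξ
        exact absurd hξ (Set.notMem_empty ξ)
      rw [hGG1 β hUne] at hξ
      by_cases hξU : ξ ∈ U β
      · obtain ⟨q, hq, hβq, hξq⟩ := (hUmem β ξ).mp hξU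
        obtain ⟨hbw, b', hb'b, hb'w, hb'x, hb'r⟩ := q.G_cond β hβq ξ hξq hinacc b hb hot
        refine ⟨hWD q hq hbw, b', hb'b, hWD q hq hb'w, hb'x, ?_⟩
        rw [hR1 q hq b' hb'w ξ (q.G_bdd β hβq hξq), hZ1 q hq β hβq]
        exact hb'r
      · exfalso
        have hξM : ξ = sSup (U β) := by
          rcases hξ with h | h
          exacts [absurd h hξU, Set.mem_singleton_iff.mp h]
        obtain ⟨c, hc, hcinacc⟩ := hinacc
        obtain ⟨a0, ha0⟩ := id hUne
        obtain ⟨q, hq, hβq, ha0q⟩ := (hUmem β a0).mp ha0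
        have hMq : sSup (U β) ∉ q.G β := by
          intro h
          exact hξU (hξM ▸ hGsubU q hq β hβq h)
        have hneU : q.G β ≠ U β := by
          intro h
          have h1 : (q.G β).Nonempty := by rw [h]; exact hUne
          have h2 : sSup (U β) ∈ q.G β := by
            rw [← h]
            exact q.G_closed β hβq _ subset_rfl h1
          exact hMq h2
        obtain ⟨a1, ha1U, ha1q⟩ := hexa q hq β hβq hneU
        obtain ⟨q', hq', hβq', ha1q'⟩ := (hUmem β a1).mp ha1U
        obtain ⟨u, hu, hqu, hq'u, hcl⟩ := hup q hq q' hq'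
        have hne2 : q.G β ≠ u.G β := by
          intro h
          have h3 : a1 ∈ u.G β := hq'u.Gsub β hβq' ha1q'
          rw [← h] at h3
          exact ha1q h3
        have hγξ : γ.ord < ξ := by
          have h1 : γ.ord < sSup (u.G β) := hcl β hβq hne2
          have h2 : sSup (u.G β) ≤ sSup (U β) := by
            apply csSup_le ⟨a1, hq'u.Gsub β hβq' ha1q'⟩
            intro a ha
            exact le_csSup (hbddU β) (hGsubU u hu β (hqu.Bsub hβq) ha)
          rw [hξM]
          exact h1.trans_le h2
        have hγc : γ < c := by
          rw [← Cardinal.ord_lt_ord, ← hc]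
          exact hγξ
        -- decompose `ξ` as a sup of fewer than `c` smaller ordinals
        have hflt : ∀ i : γ.out,
            sSup {a | a ∈ U β ∧ β ∈ (g i).B ∧ a ∈ (g i).G β} < ξ := by
          intro i
          by_cases hne : {a | a ∈ U β ∧ β ∈ (g i).B ∧ a ∈ (g i).G β}.Nonempty
          · have hle : sSup {a | a ∈ U β ∧ β ∈ (g i).B ∧ a ∈ (g i).G β} ≤ ξ := by
              rw [hξM]
              exact csSup_le hne fun a ha => le_csSup (hbddU β) ha.1
            have hmem : sSup {a | a ∈ U β ∧ β ∈ (g i).B ∧ a ∈ (g i).G β} ∈ U β := by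
              obtain ⟨a2, ha2⟩ := id hne
              exact hGsubU (g i) (hg1 i) β ha2.2.1
                ((g i).G_closed β ha2.2.1 _ (fun a ha => ha.2.2) hne)
            exact lt_of_le_of_ne hle fun h => hξU (h ▸ hmem)
          · rw [Set.not_nonempty_iff_eq_empty.mp hne, csSup_empty]
            exact (zero_le (a := γ.ord)).trans_lt hγξ
        have hξle : ξ ≤ ⨆ i : γ.out, sSup {a | a ∈ U β ∧ β ∈ (g i).B ∧ a ∈ (g i).G β} := by
          rw [hξM]
          apply csSup_le hUne
          intro a ha
          obtain ⟨q1, hq1, hβ1, ha1⟩ := (hUmem β a).mp ha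
          obtain ⟨i, hi⟩ := hg2 q1 hq1
          have hai : a ∈ {a | a ∈ U β ∧ β ∈ (g i).B ∧ a ∈ (g i).G β} := by
            refine ⟨ha, ?_, ?_⟩ <;> rw [hi] <;> assumption
          have h4 : a ≤ sSup {a | a ∈ U β ∧ β ∈ (g i).B ∧ a ∈ (g i).G β} :=
            le_csSup ⟨bsup, fun a' ha' => hUbd β a' ha'.1⟩ hai
          exact h4.trans (le_ciSup (Ordinal.bddAbove_range _) i)
        have hsuplt : (⨆ i : γ.out, sSup {a | a ∈ U β ∧ β ∈ (g i).B ∧ a ∈ (g i).G β}) <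
            c.ord := by
          apply Ordinal.iSup_lt_ord
          · rw [Cardinal.mk_out, hcinacc.isRegular.cof_eq]
            exact hγc
          · intro i
            rw [← hc]
            exact hflt i
        rw [hc] at hξle
        exact absurd hsuplt (not_lt.mpr hξle)
  refine ⟨s, ?_⟩
  intro p hp
  by_cases hps : p = s
  · exact Or.inl hps
  right
  choose uu huuD hpuu hguu hcluu using fun i => hup p hp (g i) (hg1 i)
  -- extraction lemma for changed Γ-values
  have hkey : ∀ β ∈ p.B, p.G β ≠ GG β → ∃ a ∈ U β, a ∉ p.G β := by
    intro β hβ hne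
    apply hexa p hp β hβ
    intro h
    apply hne
    by_cases hUne : (U β).Nonempty
    · have h2 : sSup (p.G β) ∈ p.G β :=
        p.G_closed β hβ _ subset_rfl (by rw [h]; exact hUne)
      rw [hGG1 β hUne, ← h, Set.union_singleton, Set.insert_eq_self.mpr h2]
    · rw [hGG2 β hUne, h, Set.not_nonempty_iff_eq_empty.mp hUne]
  refine ⟨?_, hps, ?_⟩
  · -- p.le s
    refine ⟨?_, ?_, ?_, ?_, ?_, ?_, ?_, ?_⟩
    · rw [hsW]; exact hWD p hp
    · rw [hsbd]; exact (hbD p hp).trans hb1.le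
    · intro i hi ξ hξ
      rw [hsR]
      exact (hR1 p hp i hi ξ hξ).symm
    · -- r-change cardinality
      have hsub : {i : Ordinal.{0} | i ∈ p.w ∧ ∃ ξ, p.bound ≤ ξ ∧ ξ < s.bound ∧
            s.r i ξ ≠ false} ⊆
          ⋃ i' : ULift.{1} γ.out, {j : Ordinal.{0} | j ∈ p.w ∧ ∃ ξ, p.bound ≤ ξ ∧
            ξ < (uu i'.down).bound ∧ (uu i'.down).r j ξ ≠ false} := by
        rintro j ⟨hjw, ξ, hξ1, hξ2, hξ3⟩
        rw [hsR] at hξ3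
        obtain ⟨q, hq, hjq, hξq, hrq⟩ := hR2 j ξ hξ3
        obtain ⟨i, hi⟩ := hg2 q hq
        have hqu := hguu i
        rw [hi] at hqu
        refine Set.mem_iUnion.mpr ⟨⟨i⟩, hjw, ξ, hξ1, hξq.trans_le hqu.bd, ?_⟩
        rw [← hqu.req j hjq ξ hξq]
        exact hrq
      apply lt_of_le_of_lt (Cardinal.mk_le_mk_of_subset hsub)
      apply lt_of_le_of_lt Cardinal.mk_iUnion_le_sum_mk
      apply Cardinal.sum_lt_of_isRegular hlift_reg
      · rw [Cardinal.mk_uLift, Cardinal.mk_out]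
        exact Cardinal.lift_lt.mpr hγlt
      · exact fun i' => (hpuu i'.down).rcard
    · rw [hsB]; exact hBD p hp
    · intro β hβ
      rw [hsZ]
      exact (hZ1 p hp β hβ).symm
    · -- Γ grows nicely
      intro β hβ
      constructor
      · rw [hsG]
        exact (hGsubU p hp β hβ).trans (hUGG β)
      · intro ξ hξ hnξ η hη
        rw [hsG] at hξ
        have hUne : (U β).Nonempty := ⟨η, hGsubU p hp β hβ hη⟩
        rw [hGG1 β hUne] at hξ
        rcases hξ with hξU | hξM
        · obtain ⟨q, hq, hβq, hξq⟩ := (hUmem β ξ).mp hξU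
          by_contra h
          exact hnξ (hA p hp q hq β hβ hβq ξ hξq η hη (le_of_not_gt h))
        · rw [Set.mem_singleton_iff] at hξM
          have h1 : η ≤ ξ := by
            rw [hξM]
            exact le_csSup (hbddU β) (hGsubU p hp β hβ hη)
          exact lt_of_le_of_ne h1 fun h => hnξ (h ▸ hη)
    · -- Γ-change cardinality
      have hsub2 : {β : Ordinal.{0} | β ∈ p.B ∧ p.G β ≠ s.G β} ⊆
          ⋃ i' : ULift.{1} γ.out, {β : Ordinal.{0} | β ∈ p.B ∧
            p.G β ≠ (uu i'.down).G β} := by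
        rintro β ⟨hβ, hne⟩
        rw [hsG] at hne
        obtain ⟨a, haU, hap⟩ := hkey β hβ hne
        obtain ⟨q, hq, hβq, haq⟩ := (hUmem β a).mp haU
        obtain ⟨i, hi⟩ := hg2 q hq
        have hqu := hguu i
        rw [hi] at hqu
        refine Set.mem_iUnion.mpr ⟨⟨i⟩, hβ, ?_⟩
        intro h
        apply hap
        rw [h]
        exact hqu.Gsub β hβq haq
      apply lt_of_le_of_lt (Cardinal.mk_le_mk_of_subset hsub2)
      apply lt_of_le_of_lt Cardinal.mk_iUnion_le_sum_mk
      apply Cardinal.sum_lt_of_isRegular hlift_reg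
      · rw [Cardinal.mk_uLift, Cardinal.mk_out]
        exact Cardinal.lift_lt.mpr hγlt
      · exact fun i' => (hpuu i'.down).Gcard
  · -- the γ-clause
    intro β hβ hne
    rw [hsG] at hne ⊢
    obtain ⟨a, haU, hap⟩ := hkey β hβ hne
    obtain ⟨q, hq, hβq, haq⟩ := (hUmem β a).mp haU
    obtain ⟨u, hu, hpu, hqu2, hcl⟩ := hup p hp q hq
    have hne2 : p.G β ≠ u.G β := by
      intro h
      apply hap
      rw [h]
      exact hqu2.Gsub β hβq haq
    have h1 : γ.ord < sSup (u.G β) := hcl β hβ hne2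
    have h2 : sSup (u.G β) ≤ sSup (GG β) := by
      apply csSup_le ⟨a, hqu2.Gsub β hβq haq⟩
      intro b hbu
      exact le_csSup (hbddGG β) (hUGG β (hGsubU u hu β (hpu.Bsub hβ) hbu))
    exact h1.trans_le h2
end

section
/- Let δ < λ be regular cardinals with δ inaccessible and λ > δ⁺, let S ⊆ λ be a set of ordinals each of cofinality δ and greater than δ, let X = ⟨x_β : β ∈ S⟩ be a sequence such that each x_β ⊆ β is cofinal in β and has order type δ, and let γ < δ be an infinite cardinal. If p₁ ≤ p₂ are conditions in P¹_{δ,λ}[S], then there is a condition q ∈ P¹_{δ,λ}[S] with p₁ ≤^γ q and p₂ ≤^γ q. -/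
open Cardinal

/-- If `p₁ ≤ p₂` in `P¹_{δ,λ}[S]`, then there is a condition `q` with
`p₁ ≤^γ q` and `p₂ ≤^γ q`. -/
theorem P1_leGamma_amalgamation (δ lam : Cardinal.{0})
    (hδreg : δ.IsRegular) (hlamreg : lam.IsRegular)
    (hδinacc : δ.IsInaccessible) (hlt : δ < lam) (hlam_gt : Order.succ δ < lam)
    (S : Set Ordinal.{0}) (hS_sub : S ⊆ Set.Iio lam.ord)
    (hS_cof : ∀ β ∈ S, Ordinal.cof β = δ) (hS_gt : ∀ β ∈ S, δ.ord < β)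
    (x : Ordinal.{0} → Set Ordinal.{0})
    (hx_sub : ∀ β ∈ S, x β ⊆ Set.Iio β)
    (hx_cofinal : ∀ β ∈ S, ∀ c < β, ∃ d ∈ x β, c ≤ d)
    (hx_ot : ∀ β ∈ S, otype (x β) = Ordinal.lift.{1} δ.ord)
    (γ : Cardinal.{0}) (hγinf : ℵ₀ ≤ γ) (hγlt : γ < δ)
    (p₁ p₂ : P1Cond δ lam S x) (hle : p₁.le p₂) :
    ∃ q : P1Cond δ lam S x, P1Cond.leGamma γ p₁ q ∧ P1Cond.leGamma γ p₂ q := by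
  classical
  obtain ⟨hw, hbd, hragree, hrcard, hB, hZ, hG, hGcard⟩ := hle
  set m : Ordinal.{0} := max p₂.bound γ.ord with hm
  set η : Ordinal.{0} := m + 1 with hηdef
  have hmη : m < η := lt_of_lt_of_le (Order.lt_succ m) (by rw [hηdef, Ordinal.add_one_eq_succ])
  have hηb : η < η + 1 := lt_of_lt_of_le (Order.lt_succ η) (by rw [Ordinal.add_one_eq_succ])
  have hδlim : Order.IsSuccLimit δ.ord := Cardinal.isSuccLimit_ord hδreg.aleph0_le
  have hmlt : m < δ.ord := max_lt p₂.bound_lt (Cardinal.ord_lt_ord.mpr hγlt)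
  have hηlt : η < δ.ord := by
    rw [hηdef, Ordinal.add_one_eq_succ]; exact hδlim.succ_lt hmlt
  have hbdlt : η + 1 < δ.ord := by
    rw [Ordinal.add_one_eq_succ]; exact hδlim.succ_lt hηlt
  have hb2m : p₂.bound ≤ m := le_max_left _ _
  have hγm : γ.ord ≤ m := le_max_right _ _
  set D : Set Ordinal.{0} := {β | β ∈ p₁.B ∧ p₁.G β ≠ p₂.G β} with hD
  have hDB2 : D ⊆ p₂.B := fun β hβ => hB hβ.1
  -- the new condition
  refine ⟨⟨p₂.w, η + 1, fun i ξ => if ξ < p₂.bound then p₂.r i ξ else false, p₂.B, p₂.Z,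
    fun β => if β ∈ D then insert η (p₂.G β) else p₂.G β,
    p₂.w_sub, p₂.w_card, hbdlt, p₂.B_sub, p₂.Z_cond, ?_, ?_, ?_⟩, ?_, ?_⟩
  · -- G_bdd
    intro β hβ
    by_cases hβD : β ∈ D
    · rw [if_pos hβD]
      intro ξ hξ
      rcases Set.mem_insert_iff.mp hξ with h | h
      · exact h ▸ hηb
      · exact lt_trans (p₂.G_bdd β hβ h) (lt_of_le_of_lt hb2m (lt_trans hmη hηb))
    · rw [if_neg hβD]
      intro ξ hξ
      exact lt_trans (p₂.G_bdd β hβ hξ) (lt_of_le_of_lt hb2m (lt_trans hmη hηb))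
  · -- G_closed
    intro β hβ s hs hne
    by_cases hβD : β ∈ D
    · rw [if_pos hβD] at hs ⊢
      by_cases hηs : η ∈ s
      · have hub : ∀ ξ ∈ s, ξ ≤ η := by
          intro ξ hξ
          rcases Set.mem_insert_iff.mp (hs hξ) with h | h
          · exact h.le
          · exact le_of_lt (lt_of_lt_of_le (p₂.G_bdd β hβ h) (le_of_lt (lt_of_le_of_lt hb2m hmη)))
        have hbdd : BddAbove s := ⟨η, hub⟩
        have : sSup s = η := le_antisymm (csSup_le hne hub) (le_csSup hbdd hηs)
        rw [this]; exact Set.mem_insert _ _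
      · have hs' : s ⊆ p₂.G β := by
          intro ξ hξ
          rcases Set.mem_insert_iff.mp (hs hξ) with h | h
          · exact absurd (h ▸ hξ) hηs
          · exact h
        exact Set.mem_insert_of_mem _ (p₂.G_closed β hβ s hs' hne)
    · rw [if_neg hβD] at hs ⊢
      exact p₂.G_closed β hβ s hs hne
  · -- G_cond
    intro β hβ ξ hξ hcin b hb hot
    have hξ' : ξ ∈ p₂.G β := by
      by_cases hβD : β ∈ D
      · rw [if_pos hβD] at hξ
        rcases Set.mem_insert_iff.mp hξ with h | h
        · exfalso
          obtain ⟨c, hc1, hc2⟩ := hcin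
          have hclim : Order.IsSuccLimit c.ord := Cardinal.isSuccLimit_ord hc2.1.le
          have hmc : m < c.ord := by rw [← hc1, h]; exact hmη
          have := hclim.succ_lt hmc
          rw [← hc1, h, hηdef, Ordinal.add_one_eq_succ] at this
          exact absurd this (lt_irrefl _)
        · exact h
      · rwa [if_neg hβD] at hξ
    obtain ⟨hbw, b', hb'1, hb'2, hb'3, hb'4⟩ := p₂.G_cond β hβ ξ hξ' hcin b hb hot
    refine ⟨hbw, b', hb'1, hb'2, hb'3, ?_⟩
    rw [if_pos (show ξ < p₂.bound from p₂.G_bdd β hβ hξ')]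
    exact hb'4
  all_goals
    set q : P1Cond δ lam S x := ⟨p₂.w, η + 1, fun i ξ => if ξ < p₂.bound then p₂.r i ξ else false,
      p₂.B, p₂.Z, fun β => if β ∈ D then insert η (p₂.G β) else p₂.G β, _, _, _, _, _, _, _, _⟩
      with hq
  case _ =>
    -- p₁ ≤^γ q
    have hqG : ∀ β, q.G β = if β ∈ D then insert η (p₂.G β) else p₂.G β := fun β => rfl
    have hqr : ∀ i ξ, q.r i ξ = if ξ < p₂.bound then p₂.r i ξ else false := fun i ξ => rfl
    have hqw : q.w = p₂.w := rfl
    have hqB : q.B = p₂.B := rfl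
    have hqZ : ∀ β, q.Z β = p₂.Z β := fun β => rfl
    have hqb : q.bound = η + 1 := rfl
    by_cases heq : p₁ = q
    · exact Or.inl heq
    refine Or.inr ⟨?_, heq, ?_⟩
    · refine ⟨hqw ▸ hw, hqb ▸ le_trans hbd (le_of_lt (lt_of_le_of_lt hb2m (lt_trans hmη hηb))),
        ?_, ?_, hqB ▸ hB, fun β hβ => (hqZ β) ▸ hZ β hβ, ?_, ?_⟩
      · intro i hi ξ hξ
        rw [hqr i ξ, if_pos (lt_of_lt_of_le hξ hbd)]
        exact hragree i hi ξ hξ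
      · refine lt_of_le_of_lt (Cardinal.mk_le_mk_of_subset ?_) hrcard
        rintro i ⟨hi, ξ, hξ1, _, hξ3⟩
        rw [hqr i ξ] at hξ3
        by_cases hξb : ξ < p₂.bound
        · rw [if_pos hξb] at hξ3
          exact ⟨hi, ξ, hξ1, hξb, hξ3⟩
        · rw [if_neg hξb] at hξ3
          exact absurd rfl hξ3
      · intro β hβ
        rw [hqG β]
        by_cases hβD : β ∈ D
        · rw [if_pos hβD]
          refine ⟨(hG β hβ).1.trans (Set.subset_insert _ _), ?_⟩
          intro ξ hξ hnot η' hη'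
          rcases Set.mem_insert_iff.mp hξ with h | h
          · exact h ▸ lt_of_lt_of_le (p₁.G_bdd β hβ hη')
              (le_trans hbd (le_of_lt (lt_of_le_of_lt hb2m hmη)))
          · exact (hG β hβ).2 ξ h hnot η' hη'
        · rw [if_neg hβD]
          exact hG β hβ
      · refine lt_of_le_of_lt (Cardinal.mk_le_mk_of_subset ?_) hGcard
        rintro β ⟨hβ, hne⟩
        rw [hqG β] at hne
        by_cases hβD : β ∈ D
        · exact hβD
        · rw [if_neg hβD] at hne
          exact ⟨hβ, hne⟩
    · intro β hβ hne
      rw [hqG β] at hne ⊢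
      have hβD : β ∈ D := by
        by_contra hβD
        rw [if_neg hβD] at hne
        exact hβD ⟨hβ, hne⟩
      rw [if_pos hβD] at hne ⊢
      have hgr : IsGreatest (insert η (p₂.G β)) η := by
        refine ⟨Set.mem_insert _ _, ?_⟩
        intro ξ hξ
        rcases Set.mem_insert_iff.mp hξ with h | h
        · exact h.le
        · exact le_of_lt (lt_of_lt_of_le (p₂.G_bdd β (hDB2 hβD) h)
            (le_of_lt (lt_of_le_of_lt hb2m hmη)))
      rw [hgr.csSup_eq]
      exact lt_of_le_of_lt hγm hmη
  case _ =>
    -- p₂ ≤^γ q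
    have hqG : ∀ β, q.G β = if β ∈ D then insert η (p₂.G β) else p₂.G β := fun β => rfl
    have hqr : ∀ i ξ, q.r i ξ = if ξ < p₂.bound then p₂.r i ξ else false := fun i ξ => rfl
    have hqw : q.w = p₂.w := rfl
    have hqB : q.B = p₂.B := rfl
    have hqZ : ∀ β, q.Z β = p₂.Z β := fun β => rfl
    have hqb : q.bound = η + 1 := rfl
    by_cases heq : p₂ = q
    · exact Or.inl heq
    refine Or.inr ⟨?_, heq, ?_⟩
    · refine ⟨hqw ▸ subset_rfl, hqb ▸ le_of_lt (lt_of_le_of_lt hb2m (lt_trans hmη hηb)),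
        ?_, ?_, hqB ▸ subset_rfl, fun β hβ => (hqZ β).symm, ?_, ?_⟩
      · intro i hi ξ hξ
        rw [hqr i ξ, if_pos hξ]
      · have hempty : {i : Ordinal.{0} | i ∈ p₂.w ∧ ∃ ξ, p₂.bound ≤ ξ ∧ ξ < q.bound ∧
            q.r i ξ ≠ false} = ∅ := by
          ext i
          simp only [Set.mem_setOf_eq, Set.mem_empty_iff_false, iff_false, not_and]
          rintro _ ⟨ξ, hξ1, _, hξ3⟩
          exact hξ3 (if_neg (not_lt.mpr hξ1))
        rw [hempty, Cardinal.mk_emptyCollection]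
        exact pos_iff_ne_zero.mpr (fun h => hδreg.pos.ne' (Cardinal.lift_eq_zero.mp h))
      · intro β hβ
        rw [hqG β]
        by_cases hβD : β ∈ D
        · rw [if_pos hβD]
          refine ⟨Set.subset_insert _ _, ?_⟩
          intro ξ hξ hnot η' hη'
          rcases Set.mem_insert_iff.mp hξ with h | h
          · exact h ▸ lt_of_lt_of_le (p₂.G_bdd β hβ hη') (le_of_lt (lt_of_le_of_lt hb2m hmη))
          · exact absurd h hnot
        · rw [if_neg hβD]
          exact ⟨subset_rfl, fun ξ hξ hnot => absurd hξ hnot⟩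
      · refine lt_of_le_of_lt (Cardinal.mk_le_mk_of_subset ?_) hGcard
        rintro β ⟨hβ, hne⟩
        rw [hqG β] at hne
        by_cases hβD : β ∈ D
        · exact hβD
        · rw [if_neg hβD] at hne
          exact absurd rfl hne
    · intro β hβ hne
      rw [hqG β] at hne ⊢
      have hβD : β ∈ D := by
        by_contra hβD
        rw [if_neg hβD] at hne
        exact hne rfl
      rw [if_pos hβD] at hne ⊢
      have hgr : IsGreatest (insert η (p₂.G β)) η := by
        refine ⟨Set.mem_insert _ _, ?_⟩
        intro ξ hξ
        rcases Set.mem_insert_iff.mp hξ with h | h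
        · exact h.le
        · exact le_of_lt (lt_of_lt_of_le (p₂.G_bdd β (hDB2 hβD) h)
            (le_of_lt (lt_of_le_of_lt hb2m hmη)))
      rw [hgr.csSup_eq]
      exact lt_of_le_of_lt hγm hmη
end

section
/- For regular cardinals κ₀ ≤ κ₁ with κ₀ uncountable, the partial ordering K(κ₀,κ₁) is κ₀-directed closed: for every cardinal γ < κ₀, every directed subset of K(κ₀,κ₁) of cardinality γ has an upper bound in K(κ₀,κ₁). -/
open Cardinal

/-- A condition in `K(κ₀,κ₁)`: a triple `⟨w, α, r̄⟩` where `w ⊆ κ₁` has cardinality `κ₀`,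
`α < κ₀`, and `r̄ = ⟨r_i : i ∈ w⟩` is a sequence of functions from `α` to `{0,1}`
(represented as a total function `r`, whose values are only relevant for `i ∈ w` and
arguments `< α`). -/
structure KCond (κ₀ κ₁ : Cardinal.{0}) where
  /-- the support `w` -/
  w : Set Ordinal.{0}
  /-- the common domain `α` of the functions `r_i` -/
  bound : Ordinal.{0}
  /-- `r i ξ` is the value `r_i(ξ)` for `i ∈ w` and `ξ < bound` -/
  r : Ordinal.{0} → Ordinal.{0} → Bool
  w_sub : w ⊆ Set.Iio κ₁.ord
  w_card : #w = Cardinal.lift.{1} κ₀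
  bound_lt : bound < κ₀.ord

/-- The ordering on `K(κ₀,κ₁)`. -/
def KCond.le {κ₀ κ₁ : Cardinal.{0}} (p q : KCond κ₀ κ₁) : Prop :=
  p.w ⊆ q.w ∧ p.bound ≤ q.bound ∧
    (∀ i ∈ p.w, ∀ ξ < p.bound, p.r i ξ = q.r i ξ) ∧
    #{i : Ordinal.{0} | i ∈ p.w ∧ ∃ ξ, p.bound ≤ ξ ∧ ξ < q.bound ∧ q.r i ξ ≠ false} <
      Cardinal.lift.{1} κ₀

/-- Two conditions are compatible if some condition extends both. -/
def KCond.Compatible {κ₀ κ₁ : Cardinal.{0}} (p q : KCond κ₀ κ₁) : Prop :=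
  ∃ s : KCond κ₀ κ₁, p.le s ∧ q.le s

theorem isRegular_lift {c : Cardinal.{0}} (h : c.IsRegular) :
    (Cardinal.lift.{1} c).IsRegular := by
  refine ⟨Cardinal.aleph0_le_lift.2 h.1, ?_⟩
  rw [← Cardinal.lift_ord, ← Ordinal.lift_cof]
  exact Cardinal.lift_le.2 h.2

/-- For regular cardinals `κ₀ ≤ κ₁` with `κ₀` uncountable, the partial
ordering `K(κ₀,κ₁)` is `κ₀`-directed closed. -/
theorem K_directed_closed (κ₀ κ₁ : Cardinal.{0})
    (h₀ : κ₀.IsRegular) (h₁ : κ₁.IsRegular) (hle : κ₀ ≤ κ₁) (hunc : ℵ₀ < κ₀) :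
    ∀ γ : Cardinal.{0}, γ < κ₀ →
      ∀ D : Set (KCond κ₀ κ₁), #D = Cardinal.lift.{1} γ →
        (∀ p ∈ D, ∀ q ∈ D, ∃ s ∈ D, p.le s ∧ q.le s) →
        ∃ s : KCond κ₀ κ₁, ∀ p ∈ D, p.le s := by
  intro γ hγ D hD hdir
  classical
  have hκpos : (0 : Ordinal) < κ₀.ord := by
    have := Cardinal.ord_lt_ord.2 (lt_of_lt_of_le Cardinal.aleph0_pos h₀.1)
    simpa using this
  rcases Set.eq_empty_or_nonempty D with hDe | ⟨p₀, hp₀⟩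
  · subst hDe
    refine ⟨⟨Set.Iio κ₀.ord, 0, fun _ _ => false, ?_, ?_, hκpos⟩, by simp⟩
    · exact fun x hx => lt_of_lt_of_le hx (Cardinal.ord_le_ord.2 hle)
    · rw [Ordinal.mk_Iio_ordinal, Cardinal.card_ord]
  -- nonempty case
  set ι := Quotient.out γ with hι
  have hmkι : #ι = γ := Cardinal.mk_out γ
  have he : Nonempty (ι ≃ ↥D) := by
    rw [← Cardinal.lift_mk_eq'.{0,1}]
    rw [hmkι, ← hD, Cardinal.lift_uzero]
  obtain ⟨e⟩ := he
  set g : ι → KCond κ₀ κ₁ := fun j => (e j : KCond κ₀ κ₁) with hg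
  have gD : ∀ j, g j ∈ D := fun j => (e j).2
  have gsurj : ∀ p ∈ D, ∃ j, g j = p := by
    intro p hp
    refine ⟨e.symm ⟨p, hp⟩, ?_⟩
    simp [hg]
  have hne : Nonempty ι := ⟨e.symm ⟨p₀, hp₀⟩⟩
  -- the new bound
  set β : Ordinal := ⨆ j, (g j).bound with hβ
  have hβlt : β < κ₀.ord := by
    refine Cardinal.iSup_lt_ord_of_isRegular h₀ ?_ (fun j => (g j).bound_lt)
    rw [hmkι]; exact hγ
  have hleβ : ∀ j, (g j).bound ≤ β :=
    fun j => le_ciSup (Ordinal.bddAbove_range _) j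
  -- the new support
  set W : Set Ordinal.{0} := ⋃ j : ULift.{1} ι, (g j.down).w with hW
  have hWsub : W ⊆ Set.Iio κ₁.ord := by
    intro x hx
    obtain ⟨j, hj⟩ := Set.mem_iUnion.1 hx
    exact (g j.down).w_sub hj
  have haleph : ℵ₀ ≤ Cardinal.lift.{1} κ₀ := Cardinal.aleph0_le_lift.2 h₀.1
  have hWcard : #W = Cardinal.lift.{1} κ₀ := by
    refine le_antisymm ?_ ?_
    · refine le_trans (Cardinal.mk_iUnion_le _) ?_
      have h1 : #(ULift.{1} ι) = Cardinal.lift.{1} γ := by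
        rw [Cardinal.mk_uLift, hmkι]
      have h2 : ⨆ j : ULift.{1} ι, #((g j.down).w) = Cardinal.lift.{1} κ₀ := by
        simp only [KCond.w_card]
        exact ciSup_const
      rw [h1, h2]
      calc Cardinal.lift.{1} γ * Cardinal.lift.{1} κ₀
          ≤ Cardinal.lift.{1} κ₀ * Cardinal.lift.{1} κ₀ :=
            mul_le_mul_left (Cardinal.lift_le.2 hγ.le) _
        _ = Cardinal.lift.{1} κ₀ := Cardinal.mul_eq_self haleph
    · rw [← (g (ULift.up hne.some).down).w_card]
      exact Cardinal.mk_le_mk_of_subset (Set.subset_iUnion (fun j : ULift.{1} ι => (g j.down).w) _)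
  -- the new function
  set R : Ordinal.{0} → Ordinal.{0} → Bool := fun i ξ =>
    if h : ∃ j, i ∈ (g j).w ∧ ξ < (g j).bound then (g h.choose).r i ξ else false with hR
  -- agreement lemma
  have key : ∀ p ∈ D, ∀ i ∈ p.w, ∀ ξ < p.bound, p.r i ξ = R i ξ := by
    intro p hp i hi ξ hξ
    obtain ⟨j, hj⟩ := gsurj p hp
    have h : ∃ j', i ∈ (g j').w ∧ ξ < (g j').bound := ⟨j, by rw [hj]; exact ⟨hi, hξ⟩⟩
    have hRval : R i ξ = (g h.choose).r i ξ := by rw [hR]; exact dif_pos h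
    obtain ⟨hqi, hqξ⟩ := h.choose_spec
    obtain ⟨u, hu, hpu, hqu⟩ := hdir p hp (g h.choose) (gD _)
    rw [hRval, hqu.2.2.1 i hqi ξ hqξ, ← hpu.2.2.1 i hi ξ hξ]
  refine ⟨⟨W, β, R, hWsub, hWcard, hβlt⟩, ?_⟩
  intro p hp
  obtain ⟨j₀, hj₀⟩ := gsurj p hp
  refine ⟨?_, ?_, ?_, ?_⟩
  · rw [← hj₀]
    exact Set.subset_iUnion (fun j : ULift.{1} ι => (g j.down).w) (ULift.up j₀)
  · rw [← hj₀]; exact hleβ j₀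
  · exact key p hp
  · -- the bad set
    show #{i : Ordinal.{0} | i ∈ p.w ∧ ∃ ξ, p.bound ≤ ξ ∧ ξ < β ∧ R i ξ ≠ false} <
      Cardinal.lift.{1} κ₀
    -- choose common upper bounds
    have hch : ∀ j : ULift.{1} ι, ∃ u, u ∈ D ∧ p.le u ∧ (g j.down).le u := by
      intro j
      obtain ⟨u, hu, h1, h2⟩ := hdir p hp (g j.down) (gD _)
      exact ⟨u, hu, h1, h2⟩
    choose u huD hpu hgu using hch
    have hsub : {i : Ordinal.{0} | i ∈ p.w ∧ ∃ ξ, p.bound ≤ ξ ∧ ξ < β ∧ R i ξ ≠ false} ⊆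
        ⋃ j : ULift.{1} ι,
          {i : Ordinal.{0} | i ∈ p.w ∧ ∃ ξ, p.bound ≤ ξ ∧ ξ < (u j).bound ∧ (u j).r i ξ ≠ false} := by
      rintro i ⟨hi, ξ, hξ1, _hξ2, hRne⟩
      have h : ∃ j', i ∈ (g j').w ∧ ξ < (g j').bound := by
        by_contra hcon
        apply hRne
        rw [hR]
        exact dif_neg hcon
      have hRval : R i ξ = (g h.choose).r i ξ := by rw [hR]; exact dif_pos h
      obtain ⟨hqi, hqξ⟩ := h.choose_spec
      set j : ULift.{1} ι := ULift.up h.choose with hj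
      have hgj : g j.down = g h.choose := rfl
      refine Set.mem_iUnion.2 ⟨j, hi, ξ, hξ1, ?_, ?_⟩
      · exact lt_of_lt_of_le hqξ ((hgu j).2.1)
      · have := (hgu j).2.2.1 i hqi ξ hqξ
        rw [← this, ← hRval]
        exact hRne
    refine lt_of_le_of_lt (Cardinal.mk_le_mk_of_subset hsub) ?_
    refine lt_of_le_of_lt (Cardinal.mk_iUnion_le _) ?_
    have h1 : #(ULift.{1} ι) = Cardinal.lift.{1} γ := by rw [Cardinal.mk_uLift, hmkι]
    refine Cardinal.mul_lt_of_lt haleph ?_ ?_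
    · rw [h1]; exact Cardinal.lift_lt.2 hγ
    · refine Cardinal.iSup_lt_of_isRegular (isRegular_lift h₀) ?_ ?_
      · rw [h1]; exact Cardinal.lift_lt.2 hγ
      · intro j
        exact (hpu j).2.2.2
end
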